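/- arXiv:2509.24349 — 2 statements merged into one kernel-verified Lean document; each statement's English description precedes it below -/
import Mathlib

section
/- Under the hypotheses of the previous setting (every vertex outside Hᵢ has exactly one neighbor in Hᵢ, for i = 1,2, with Δ = H₁ ∩ H₂), the relation (u₁,u₂) ↦ (u₁ adjacent to u₂) restricted to (H₁\Δ) × (H₂\Δ) defines a bijection between H₁ ⊖ Δ and H₂ ⊖ Δ, where Hᵢ ⊖ Δ = { u ∈ Hᵢ\Δ : u has no neighbor in Δ }. -/
private lemma attach_aux
    {V : Type*} [Fintype V] [DecidableEq V]
    (Γ : SimpleGraph V) [DecidableRel Γ.Adj] (H1 H2 : Finset V)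
    (h1 : ∀ u : V, u ∉ H1 → (H1.filter (fun v => Γ.Adj u v)).card = 1)
    (h2 : ∀ u : V, u ∉ H2 → (H2.filter (fun v => Γ.Adj u v)).card = 1) :
    ∀ u1 ∈ (H1 \ (H1 ∩ H2)).filter (fun u => ∀ v ∈ H1 ∩ H2, ¬ Γ.Adj u v),
      ∃! u2 : V, (u2 ∈ (H2 \ (H1 ∩ H2)).filter (fun u => ∀ v ∈ H1 ∩ H2, ¬ Γ.Adj u v))
        ∧ Γ.Adj u1 u2 := by
  intro u1 hu1
  rw [Finset.mem_filter, Finset.mem_sdiff, Finset.mem_inter] at hu1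
  obtain ⟨⟨hu1H1, hu1Δ⟩, hno⟩ := hu1
  have hu1H2 : u1 ∉ H2 := fun h => hu1Δ ⟨hu1H1, h⟩
  obtain ⟨a, ha⟩ := Finset.card_eq_one.mp (h2 u1 hu1H2)
  have haMem : a ∈ H2 ∧ Γ.Adj u1 a := by
    have := ha ▸ Finset.mem_singleton_self a
    simpa [Finset.mem_filter] using this
  obtain ⟨haH2, hadj⟩ := haMem
  have haΔ : a ∉ H1 ∩ H2 := fun h => hno a h hadj
  have haH1 : a ∉ H1 := fun h => haΔ (Finset.mem_inter.mpr ⟨h, haH2⟩)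
  obtain ⟨b, hb⟩ := Finset.card_eq_one.mp (h1 a haH1)
  have hu1b : u1 = b := by
    have : u1 ∈ H1.filter (fun v => Γ.Adj a v) := by
      simp [Finset.mem_filter, hu1H1, hadj.symm]
    simpa [hb] using this
  have hano : ∀ v ∈ H1 ∩ H2, ¬ Γ.Adj a v := by
    intro v hv hav
    have hvH1 : v ∈ H1 := (Finset.mem_inter.mp hv).1
    have : v ∈ H1.filter (fun w => Γ.Adj a w) := by
      simp [Finset.mem_filter, hvH1, hav]
    have hvb : v = b := by simpa [hb] using this
    rw [hu1b, ← hvb] at hu1Δ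
    exact hu1Δ (Finset.mem_inter.mp hv)
  refine ⟨a, ⟨?_, hadj⟩, ?_⟩
  · rw [Finset.mem_filter, Finset.mem_sdiff]
    exact ⟨⟨haH2, haΔ⟩, hano⟩
  · rintro y ⟨hy, hyadj⟩
    rw [Finset.mem_filter, Finset.mem_sdiff] at hy
    have : y ∈ H2.filter (fun v => Γ.Adj u1 v) := by
      simp [Finset.mem_filter, hy.1.1, hyadj]
    simpa [ha] using this

theorem attachment_bijection
    {V : Type*} [Fintype V] [DecidableEq V]
    (Γ : SimpleGraph V) [DecidableRel Γ.Adj] (H1 H2 : Finset V)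
    (h1 : ∀ u : V, u ∉ H1 → (H1.filter (fun v => Γ.Adj u v)).card = 1)
    (h2 : ∀ u : V, u ∉ H2 → (H2.filter (fun v => Γ.Adj u v)).card = 1) :
    -- Δ = H₁ ∩ H₂ and the perfect complements Hᵢ ⊖ Δ
    let Δ : Finset V := H1 ∩ H2
    let P1 : Finset V := (H1 \ Δ).filter (fun u => ∀ v ∈ Δ, ¬ Γ.Adj u v)
    let P2 : Finset V := (H2 \ Δ).filter (fun u => ∀ v ∈ Δ, ¬ Γ.Adj u v)
    -- adjacency defines a bijection `H₁ ⊖ Δ ≃ H₂ ⊖ Δ`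
    (∀ u1 ∈ P1, ∃! u2 : V, u2 ∈ P2 ∧ Γ.Adj u1 u2) ∧
    (∀ u2 ∈ P2, ∃! u1 : V, u1 ∈ P1 ∧ Γ.Adj u1 u2) := by
  intro Δ P1 P2
  constructor
  · exact attach_aux Γ H1 H2 h1 h2
  · intro u2 hu2
    simp only [P1, P2, Δ, Finset.inter_comm H1 H2] at *
    have h := attach_aux Γ H2 H1 h2 h1 u2 hu2
    obtain ⟨u1, ⟨hu1, hadj⟩, huniq⟩ := h
    exact ⟨u1, ⟨hu1, hadj.symm⟩, fun y ⟨hy, hyadj⟩ => huniq y ⟨hy, hyadj.symm⟩⟩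
end

section
/- Let L be the lattice on generators v₀,…,v₇ (vertices of the Wagner graph C₈(1,4)) together with h and p, with h² = 8, vᵢ² = −2, vᵢ·h = 1, vᵢ·vⱼ given by adjacency in the Wagner graph, p² = 0, p·h = 3, and p·vᵢ = 1 for i ∈ {0,1,2} and p·vᵢ = 0 otherwise. Then the symmetric bilinear form on (Zv₀+⋯+Zv₇+Zh+Zp) has at least two positive eigenvalues (i.e., the form is not hyperbolic). -/
/-- Gram matrix of the lattice generated by the vertices `v₀,…,v₇` of the
Wagner graph `C₈(1,4)` (indices `0..7`), `h` (index `8`), and a would-be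
3-isotropic vector `p` (index `9`) with `p·vᵢ = 1` for `i ∈ {0,1,2}`. -/
def gramWagnerP : Matrix (Fin 10) (Fin 10) ℝ := fun i j =>
  if i.val < 8 then
    if j.val < 8 then
      if i = j then -2
      else if j.val = (i.val + 1) % 8 ∨ i.val = (j.val + 1) % 8 ∨
              j.val = (i.val + 4) % 8 ∨ i.val = (j.val + 4) % 8 then 1 else 0
    else if j.val = 8 then 1
    else if i.val = 0 ∨ i.val = 1 ∨ i.val = 2 then 1 else 0
  else if i.val = 8 then
    if j.val < 8 then 1 else if j.val = 8 then 8 else 3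
  else
    if j.val < 8 then (if j.val = 0 ∨ j.val = 1 ∨ j.val = 2 then 1 else 0)
    else if j.val = 8 then 3 else 0

set_option maxHeartbeats 4000000 in
/-- The form has at least two positive eigenvalues: there is a 2-dimensional
subspace on which it is positive definite (so the lattice is not hyperbolic). -/
theorem wagner_with_isotropic_not_hyperbolic :
    ∃ x y : Fin 10 → ℝ, LinearIndependent ℝ ![x, y] ∧
      ∀ a b : ℝ, ¬ (a = 0 ∧ b = 0) →
        0 < dotProduct (a • x + b • y) (gramWagnerP.mulVec (a • x + b • y)) := by
  refine ⟨![1,1,1,1,1,1,1,1,9,3], ![-2,-4,-2,2,2,1,2,2,2,-7], ?_, ?_⟩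
  · rw [LinearIndependent.pair_iff]
    intro s t h
    have h0 := congrFun h 0
    have h3 := congrFun h 3
    simp [Matrix.cons_val_zero, Matrix.cons_val_one] at h0 h3
    constructor <;> linarith
  · intro a b hab
    have key : dotProduct
        (a • ![(1:ℝ),1,1,1,1,1,1,1,9,3] + b • ![-2,-4,-2,2,2,1,2,2,2,-7])
        (gramWagnerP.mulVec (a • ![(1:ℝ),1,1,1,1,1,1,1,9,3] + b • ![-2,-4,-2,2,2,1,2,2,2,-7]))
        = 980*a^2 - 92*a*b + 6*b^2 := by
      simp [gramWagnerP, dotProduct, Matrix.mulVec, Fin.sum_univ_succ, Fin.sum_univ_zero,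
        Fin.isValue, Matrix.cons_val_zero, Matrix.cons_val_one, Matrix.head_cons]
      norm_num [Fin.ext_iff, Fin.val_succ]
      ring
    rw [key]
    by_cases ha : a = 0
    · subst ha
      have hb : b ≠ 0 := fun h => hab ⟨rfl, h⟩
      have := sq_pos_of_ne_zero hb
      nlinarith
    · have := sq_pos_of_ne_zero ha
      nlinarith [sq_nonneg (3*b - 23*a)]
end
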